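/- For any field L and any invertible n×n matrix A over the ring of Laurent polynomials L[x, x⁻¹], there exist an invertible matrix B over L[x] and an invertible matrix C over L[x⁻¹] such that B·A·C is the diagonal matrix diag(x^{d₁}, ..., x^{dₙ}) for some integers d₁ ≥ d₂ ≥ ... ≥ dₙ. -/

import Mathlib

open Matrix LaurentPolynomial

namespace DedekindWeberAux

open Polynomial

variable {L : Type*} [Field L] {n : ℕ}


/-- The ring hom `L[X] → L[T,T⁻¹]` sending `X ↦ T (-1)`. -/
noncomputable def phi (L : Type*) [Field L] : Polynomial L →+* LaurentPolynomial L :=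
  Polynomial.eval₂RingHom (LaurentPolynomial.C : L →+* LaurentPolynomial L) (T (-1))

lemma phi_apply (p : Polynomial L) :
    phi L p = Polynomial.eval₂ (LaurentPolynomial.C : L →+* LaurentPolynomial L) (T (-1)) p :=
  rfl

lemma phi_eq_invert (p : Polynomial L) : phi L p = invert (Polynomial.toLaurent p) := by
  induction p using Polynomial.induction_on' with
  | add f g hf hg => rw [map_add, map_add, map_add, hf, hg]
  | monomial k a =>
    rw [phi_apply, ← Polynomial.C_mul_X_pow_eq_monomial, Polynomial.toLaurent_C_mul_X_pow]
    simp only [Polynomial.eval₂_mul, Polynomial.eval₂_C, Polynomial.eval₂_pow,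
      Polynomial.eval₂_X, T_pow, mul_one, _root_.map_mul, invert_C, invert_T, mul_comm]
    norm_num

lemma isUnit_phi_iff (p : Polynomial L) : IsUnit (phi L p) ↔ IsUnit (Polynomial.toLaurent p) := by
  rw [phi_eq_invert]
  constructor
  · intro h
    have := h.map (LaurentPolynomial.invert (R := L)).symm
    simpa using this
  · intro h
    exact h.map _

lemma unit_toLaurent_char (p : Polynomial L) (hp : IsUnit (Polynomial.toLaurent p)) :
    ∃ (c : L) (k : ℕ), p = Polynomial.C c * X ^ k := by
  obtain ⟨g, hg⟩ := hp.exists_right_inv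
  obtain ⟨m, q, hq⟩ := exists_T_pow g
  have key : Polynomial.toLaurent (p * q) = Polynomial.toLaurent (X ^ m : L[X]) := by
    rw [Polynomial.toLaurent_X_pow, _root_.map_mul, hq, ← mul_assoc, hg, one_mul]
  have hdvd : p ∣ (X : L[X]) ^ m := ⟨q, (Polynomial.toLaurent_injective key).symm⟩
  obtain ⟨i, -, hi⟩ := (dvd_prime_pow Polynomial.prime_X m).mp hdvd
  obtain ⟨u, hu⟩ := hi.symm
  obtain ⟨r, hr, hrC⟩ := Polynomial.isUnit_iff.mp u.isUnit
  exact ⟨r, i, by rw [← hu, ← hrC, mul_comm]⟩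

/-- A polynomial whose `toLaurent`-image (equivalently `phi`-image) is a unit and whose
constant coefficient is nonzero is itself a unit. -/
lemma isUnit_of_phi_unit (p : Polynomial L) (hp : IsUnit (phi L p)) (h0 : p.coeff 0 ≠ 0) :
    IsUnit p := by
  obtain ⟨c, k, rfl⟩ := unit_toLaurent_char p ((isUnit_phi_iff p).mp hp)
  rcases k with _ | k
  · have : c ≠ 0 := by simpa using h0
    simpa using Polynomial.isUnit_C.mpr (isUnit_iff_ne_zero.mpr this)
  · exfalso
    apply h0
    simp [Polynomial.coeff_C_mul, Polynomial.coeff_X_pow]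

lemma key_reflect (N : ℕ) (p : Polynomial L) (hp : p.natDegree ≤ N) :
    phi L (p.reflect N) = T (-(N : ℤ)) * Polynomial.toLaurent p := by
  revert hp
  refine Polynomial.induction_with_natDegree_le
    (fun p => phi L (p.reflect N) = T (-(N : ℤ)) * Polynomial.toLaurent p) N ?_ ?_ ?_ p
  · simp
  · intro k r _ hk
    rw [Polynomial.reflect_C_mul_X_pow, Polynomial.revAt_le hk, phi_apply,
      Polynomial.toLaurent_C_mul_X_pow]
    simp only [Polynomial.eval₂_mul, Polynomial.eval₂_C, Polynomial.eval₂_pow,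
      Polynomial.eval₂_X, T_pow, mul_one]
    rw [mul_left_comm, ← T_add]
    congr 2
    push_cast [Nat.cast_sub hk]
    ring
  · intro f g _ _ hf hg
    rw [Polynomial.reflect_add, map_add, hf, hg, _root_.map_add, mul_add]


/-- Row degree: the sup of the `natDegree`s of the entries of row `i`. -/
def rdeg (A : Matrix (Fin n) (Fin n) (Polynomial L)) (i : Fin n) : ℕ :=
  Finset.univ.sup fun j => (A i j).natDegree

/-- Leading coefficient matrix (rowwise). -/
def lam (A : Matrix (Fin n) (Fin n) (Polynomial L)) : Matrix (Fin n) (Fin n) L :=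
  Matrix.of fun i j => (A i j).coeff (rdeg A i)

lemma natDegree_le_rdeg (A : Matrix (Fin n) (Fin n) (Polynomial L)) (i j : Fin n) :
    (A i j).natDegree ≤ rdeg A i :=
  Finset.le_sup (f := fun j => (A i j).natDegree) (Finset.mem_univ j)

lemma degree_le_rdeg (A : Matrix (Fin n) (Fin n) (Polynomial L)) (i j : Fin n) :
    (A i j).degree ≤ (rdeg A i : ℕ) :=
  Polynomial.degree_le_natDegree.trans (by exact_mod_cast Nat.cast_le.mpr (natDegree_le_rdeg A i j))

lemma step1 (N : ℕ) : ∀ (A : Matrix (Fin n) (Fin n) (Polynomial L)),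
    (∑ i, rdeg A i) ≤ N → A.det ≠ 0 →
    ∃ U : Matrix (Fin n) (Fin n) (Polynomial L),
      IsUnit U.det ∧ (lam (U * A)).det ≠ 0 := by
  induction N using Nat.strong_induction_on with
  | _ N ih =>
  intro A hN hdet
  classical
  by_cases h0 : (lam A).det ≠ 0
  · exact ⟨1, by simp, by simpa using h0⟩
  push_neg at h0
  obtain ⟨v, hv0, hvK⟩ := Matrix.exists_vecMul_eq_zero_iff.mpr h0
  have hS : (Finset.univ.filter fun i => v i ≠ 0).Nonempty := by
    obtain ⟨i, hi⟩ := Function.ne_iff.mp hv0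
    exact ⟨i, by simpa using hi⟩
  obtain ⟨i₀, hi₀mem, hmax⟩ := Finset.exists_max_image _ (fun i => rdeg A i) hS
  have hvi₀ : v i₀ ≠ 0 := (Finset.mem_filter.mp hi₀mem).2
  have hmax' : ∀ k, v k ≠ 0 → rdeg A k ≤ rdeg A i₀ := fun k hk =>
    hmax k (Finset.mem_filter.mpr ⟨Finset.mem_univ k, hk⟩)
  set r := rdeg A with hr
  set c : Fin n → Polynomial L := fun k => Polynomial.C (v k) * X ^ (r i₀ - r k) with hc
  set U₀ : Matrix (Fin n) (Fin n) (Polynomial L) := Matrix.updateRow 1 i₀ c with hU₀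
  -- determinant of U₀
  have hcrow : c = ∑ k, c k • (1 : Matrix (Fin n) (Fin n) (Polynomial L)) k := by
    funext j
    simp [Matrix.one_apply, Finset.sum_ite_eq, mul_ite]
  have hdetU₀ : U₀.det = Polynomial.C (v i₀) := by
    rw [hU₀, hcrow, Matrix.det_updateRow_sum]
    simp [hc]
  have hUdet : IsUnit U₀.det := by
    rw [hdetU₀]
    exact Polynomial.isUnit_C.mpr (isUnit_iff_ne_zero.mpr hvi₀)
  -- rows other than i₀ unchanged
  have hrowne : ∀ i, i ≠ i₀ → ∀ j, (U₀ * A) i j = A i j := by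
    intro i hi j
    rw [Matrix.mul_apply]
    have : ∀ k, U₀ i k = (1 : Matrix (Fin n) (Fin n) (Polynomial L)) i k := fun k => by
      rw [hU₀, Matrix.updateRow_ne hi]
    simp only [this, Matrix.one_apply]
    simp [Finset.sum_ite_eq]
  have hrowi₀ : ∀ j, (U₀ * A) i₀ j = ∑ k, c k * A k j := by
    intro j
    rw [Matrix.mul_apply]
    simp [hU₀]
  -- the new i₀ row has strictly smaller degree
  have hdeglt : ∀ j, ((U₀ * A) i₀ j).degree < (r i₀ : ℕ) := by
    intro j
    rw [Polynomial.degree_lt_iff_coeff_zero]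
    intro m hm
    rw [hrowi₀, Polynomial.finset_sum_coeff]
    have hterm : ∀ k, (c k * A k j).coeff m = v k * (A k j).coeff (m - (r i₀ - r k)) := by
      intro k
      by_cases hvk : v k = 0
      · simp [hc, hvk]
      · have hΔ : (r i₀ - r k) ≤ m := le_trans (Nat.sub_le _ _) (by exact_mod_cast hm)
        rw [hc, mul_assoc, Polynomial.coeff_C_mul]
        congr 1
        have := Polynomial.coeff_X_pow_mul (A k j) (r i₀ - r k) (m - (r i₀ - r k))
        rw [Nat.sub_add_cancel hΔ] at this
        rw [this]
    rcases eq_or_lt_of_le (show (r i₀ : ℕ) ≤ m by exact_mod_cast hm) with he | hlt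
    · -- m = r i₀ : coefficient is (v ᵥ* lam A) j = 0
      have : ∀ k, (c k * A k j).coeff m = v k * lam A k j := by
        intro k
        rw [hterm k]
        by_cases hvk : v k = 0
        · simp [hvk]
        · have hk := hmax' k hvk
          have : m - (r i₀ - r k) = r k := by omega
          rw [this]
          rfl
      rw [Finset.sum_congr rfl fun k _ => this k]
      have := congrFun hvK j
      simpa [Matrix.vecMul, dotProduct, lam] using this
    · -- m > r i₀ : every term vanishes
      refine Finset.sum_eq_zero fun k _ => ?_
      rw [hterm k]
      by_cases hvk : v k = 0
      · simp [hvk]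
      · have hk := hmax' k hvk
        have : r k < m - (r i₀ - r k) := by omega
        rw [Polynomial.coeff_eq_zero_of_natDegree_lt (lt_of_le_of_lt (natDegree_le_rdeg A k j) this)]
        ring
  -- determinant of U₀ * A is nonzero
  have hdet' : (U₀ * A).det ≠ 0 := by
    rw [Matrix.det_mul, hdetU₀]
    simp only [ne_eq, mul_eq_zero, not_or]
    exact ⟨fun h => hvi₀ (by simpa using h), hdet⟩
  -- row i₀ of U₀ * A is not identically zero, so r i₀ ≥ 1
  have hri₀ : 1 ≤ r i₀ := by
    by_contra hcon
    push_neg at hcon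
    apply hdet'
    apply Matrix.det_eq_zero_of_row_eq_zero i₀
    intro j
    have h2 := hdeglt j
    have h3 : r i₀ = 0 := by omega
    rw [h3, Nat.cast_zero] at h2
    rw [← Polynomial.degree_eq_bot]
    exact Nat.WithBot.lt_zero_iff.mp h2
  -- new measure strictly smaller
  have hnd : ∀ j, ((U₀ * A) i₀ j).natDegree ≤ r i₀ - 1 := by
    intro j
    by_cases hz : (U₀ * A) i₀ j = 0
    · simp [hz]
    · have := (Polynomial.natDegree_lt_iff_degree_lt hz).mpr (hdeglt j)
      omega
  have hmeas : ∑ i, rdeg (U₀ * A) i ≤ N - 1 := by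
    have heq : ∀ i, i ≠ i₀ → rdeg (U₀ * A) i = r i := by
      intro i hi
      unfold rdeg
      exact Finset.sup_congr rfl fun j _ => by rw [hrowne i hi j]
    have hle : rdeg (U₀ * A) i₀ ≤ r i₀ - 1 := Finset.sup_le fun j _ => hnd j
    have h1 : ∑ i, rdeg (U₀ * A) i
        = rdeg (U₀ * A) i₀ + ∑ i ∈ Finset.univ.erase i₀, rdeg (U₀ * A) i :=
      (Finset.add_sum_erase _ _ (Finset.mem_univ i₀)).symm
    have h2 : ∑ i, r i = r i₀ + ∑ i ∈ Finset.univ.erase i₀, r i :=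
      (Finset.add_sum_erase _ _ (Finset.mem_univ i₀)).symm
    have h3 : ∑ i ∈ Finset.univ.erase i₀, rdeg (U₀ * A) i = ∑ i ∈ Finset.univ.erase i₀, r i :=
      Finset.sum_congr rfl fun i hi => heq i (Finset.ne_of_mem_erase hi)
    omega
  have hNpos : 1 ≤ N := by
    have : r i₀ ≤ ∑ i, r i := Finset.single_le_sum (fun i _ => Nat.zero_le _) (Finset.mem_univ i₀)
    omega
  obtain ⟨U', hU', hlam⟩ := ih (N - 1) (by omega) (U₀ * A) hmeas hdet'
  exact ⟨U' * U₀, by rw [Matrix.det_mul]; exact hU'.mul hUdet, by rwa [Matrix.mul_assoc]⟩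

lemma T_sum {ι : Type*} (s : Finset ι) (f : ι → ℤ) :
    (∏ i ∈ s, (T (f i) : LaurentPolynomial L)) = T (∑ i ∈ s, f i) := by
  induction s using Finset.cons_induction with
  | empty => simp
  | cons a s ha ih => rw [Finset.prod_cons, Finset.sum_cons, ih, T_add]

lemma scalar_comm (t : LaurentPolynomial L) (M : Matrix (Fin n) (Fin n) (LaurentPolynomial L)) :
    M * Matrix.diagonal (fun _ => t) = Matrix.diagonal (fun _ => t) * M := by
  ext i j
  rw [Matrix.mul_diagonal, Matrix.diagonal_mul, mul_comm]

end DedekindWeberAux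

open DedekindWeberAux Polynomial in
theorem dedekind_weber (L : Type*) [Field L] (n : ℕ)
    (A : Matrix (Fin n) (Fin n) (LaurentPolynomial L)) (hA : IsUnit A.det) :
    ∃ (B C : Matrix (Fin n) (Fin n) (Polynomial L)) (d : Fin n → ℤ),
      IsUnit B.det ∧ IsUnit C.det ∧ Antitone d ∧
      B.map (Polynomial.toLaurent : Polynomial L → LaurentPolynomial L) * A *
        C.map (fun p => Polynomial.eval₂ (LaurentPolynomial.C : L →+* LaurentPolynomial L)
          (T (-1)) p) =
      Matrix.diagonal (fun i => T (d i)) := by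
  classical
  -- clear denominators
  choose nn pp hpp using fun (i : Fin n) (j : Fin n) => exists_T_pow (A i j)
  set N : ℕ := Finset.univ.sup fun i => Finset.univ.sup fun j => nn i j with hN
  set A' : Matrix (Fin n) (Fin n) (Polynomial L) :=
    Matrix.of fun i j => pp i j * X ^ (N - nn i j) with hA'
  have hnnle : ∀ i j, nn i j ≤ N := fun i j =>
    le_trans (Finset.le_sup (f := fun j => nn i j) (Finset.mem_univ j))
      (Finset.le_sup (f := fun i => Finset.univ.sup fun j => nn i j) (Finset.mem_univ i))
  have hA'entry : ∀ i j, Polynomial.toLaurent (A' i j) = A i j * T (N : ℤ) := by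
    intro i j
    rw [show A' i j = pp i j * X ^ (N - nn i j) from rfl, _root_.map_mul,
      Polynomial.toLaurent_X_pow, hpp, mul_assoc, ← T_add]
    congr 2
    have := hnnle i j
    push_cast [Nat.cast_sub this]
    ring
  have hmapA' : A'.map (Polynomial.toLaurent (R := L))
      = A * Matrix.diagonal (fun _ => T (N : ℤ)) := by
    ext i j
    rw [Matrix.map_apply, hA'entry, Matrix.mul_diagonal]
  have hdetA'unit : IsUnit (Polynomial.toLaurent A'.det) := by
    rw [RingHom.map_det, RingHom.mapMatrix_apply, hmapA', Matrix.det_mul, Matrix.det_diagonal, Finset.prod_const]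
    exact hA.mul ((isUnit_T (N : ℤ)).pow _)
  have hdetA' : A'.det ≠ 0 := by
    intro h
    rw [h, map_zero] at hdetA'unit
    exact not_isUnit_zero hdetA'unit
  -- row reduction
  obtain ⟨U, hU, hlam⟩ := step1 (∑ i, rdeg A' i) A' le_rfl hdetA'
  set Bp : Matrix (Fin n) (Fin n) (Polynomial L) := U * A' with hBp
  set r : Fin n → ℕ := rdeg Bp with hr
  set E : Matrix (Fin n) (Fin n) (Polynomial L) :=
    Matrix.of fun i j => (Bp i j).reflect (r i) with hE
  -- key identity
  have hkey : Matrix.diagonal (fun i => (T (r i : ℤ) : LaurentPolynomial L)) * E.map (phi L)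
      = Bp.map (Polynomial.toLaurent (R := L)) := by
    ext i j
    rw [Matrix.diagonal_mul, Matrix.map_apply, Matrix.map_apply,
      show E i j = (Bp i j).reflect (r i) from rfl,
      key_reflect (r i) (Bp i j) (natDegree_le_rdeg Bp i j), ← mul_assoc, ← T_add]
    simp
  -- det E is a unit in L[X]
  have hdetBp : IsUnit (Polynomial.toLaurent Bp.det) := by
    rw [hBp, Matrix.det_mul, _root_.map_mul]
    exact (hU.map _).mul hdetA'unit
  have hdetkey : T ((∑ i, (r i : ℤ))) * phi L E.det = Polynomial.toLaurent Bp.det := by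
    have h := congrArg Matrix.det hkey
    rw [Matrix.det_mul, Matrix.det_diagonal, T_sum] at h
    rw [RingHom.map_det (phi L), RingHom.map_det (Polynomial.toLaurent (R := L)),
      RingHom.mapMatrix_apply, RingHom.mapMatrix_apply]
    exact h
  have hphidetE : IsUnit (phi L E.det) := by
    have : phi L E.det = T (-(∑ i, (r i : ℤ))) * Polynomial.toLaurent Bp.det := by
      rw [← hdetkey, ← mul_assoc, ← T_add]
      simp
    rw [this]
    exact (isUnit_T _).mul hdetBp
  have hcoeff0 : E.det.coeff 0 ≠ 0 := by
    have h1 : (Polynomial.constantCoeff (R := L)) E.det = (lam Bp).det := by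
      rw [RingHom.map_det, RingHom.mapMatrix_apply]
      congr 1
      ext i j
      rw [Matrix.map_apply, show E i j = (Bp i j).reflect (r i) from rfl]
      show ((Bp i j).reflect (r i)).coeff 0 = lam Bp i j
      rw [Polynomial.coeff_reflect]
      simp [lam, Polynomial.revAt_le (Nat.zero_le (r i)), hr]
    intro h
    apply hlam
    rw [← h1]
    simpa [Polynomial.constantCoeff_apply] using h
  have hdetE : IsUnit E.det := isUnit_of_phi_unit E.det hphidetE hcoeff0
  set Cm : Matrix (Fin n) (Fin n) (Polynomial L) := E⁻¹ with hCm
  have hCdet : IsUnit Cm.det := Matrix.isUnit_nonsing_inv_det E hdetE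
  have hEC : E.map (phi L) * Cm.map (phi L) = 1 := by
    rw [← Matrix.map_mul, Matrix.mul_nonsing_inv E hdetE, Matrix.map_one _ (map_zero _) (map_one _)]
  -- main diagonal equation
  have main : U.map (Polynomial.toLaurent (R := L)) * A * Cm.map (phi L)
      = Matrix.diagonal (fun i => T ((r i : ℤ) - N)) := by
    have h1 : Bp.map (Polynomial.toLaurent (R := L))
        = U.map (Polynomial.toLaurent (R := L)) * A * Matrix.diagonal (fun _ => T (N : ℤ)) := by
      rw [hBp, Matrix.map_mul, hmapA', Matrix.mul_assoc]
    have h2 : Matrix.diagonal (fun i => (T (r i : ℤ) : LaurentPolynomial L))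
        = U.map (Polynomial.toLaurent (R := L)) * A * Cm.map (phi L)
          * Matrix.diagonal (fun _ => T (N : ℤ)) := by
      calc Matrix.diagonal (fun i => (T (r i : ℤ) : LaurentPolynomial L))
          = Matrix.diagonal (fun i => (T (r i : ℤ) : LaurentPolynomial L))
            * (E.map (phi L) * Cm.map (phi L)) := by rw [hEC, Matrix.mul_one]
        _ = Bp.map (Polynomial.toLaurent (R := L)) * Cm.map (phi L) := by
            rw [← Matrix.mul_assoc, hkey]
        _ = U.map (Polynomial.toLaurent (R := L)) * A
            * (Matrix.diagonal (fun _ => T (N : ℤ)) * Cm.map (phi L)) := by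
            rw [h1]; simp only [Matrix.mul_assoc]
        _ = _ := by rw [← DedekindWeberAux.scalar_comm]; simp only [Matrix.mul_assoc]
    have h3 := congrArg (· * Matrix.diagonal (fun _ => (T (-(N : ℤ)) : LaurentPolynomial L))) h2
    simp only [Matrix.diagonal_mul_diagonal, Matrix.mul_assoc] at h3
    rw [show (fun i => T (r i : ℤ) * T (-(N:ℤ)) : Fin n → LaurentPolynomial L)
        = fun i => T ((r i : ℤ) - N) by funext i; rw [← T_add]; ring_nf] at h3
    rw [h3, show (fun _ => T (N:ℤ) * T (-(N:ℤ)) : Fin n → LaurentPolynomial L)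
        = fun _ => 1 by funext i; rw [← T_add]; simp, Matrix.diagonal_one, Matrix.mul_one,
      ← Matrix.mul_assoc]
  -- sorting
  set d₀ : Fin n → ℤ := fun i => (r i : ℤ) - N with hd₀
  set σ : Equiv.Perm (Fin n) := Tuple.sort (fun i => - d₀ i) with hσ
  have hanti : Antitone (fun i => d₀ (σ i)) := by
    intro a b hab
    have := Tuple.monotone_sort (fun i => - d₀ i) hab
    simpa using this
  have hsgn : IsUnit (((Equiv.Perm.sign σ : ℤˣ) : ℤ) : Polynomial L) := by
    rcases Int.units_eq_one_or (Equiv.Perm.sign σ) with h | h <;> simp [h]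
  refine ⟨U.submatrix σ id, Cm.submatrix id σ, fun i => d₀ (σ i), ?_, ?_, hanti, ?_⟩
  · rw [Matrix.det_permute]
    exact hsgn.mul hU
  · rw [Matrix.det_permute']
    exact hsgn.mul hCdet
  · have hmapU : (U.submatrix σ id).map (Polynomial.toLaurent (R := L))
        = (U.map (Polynomial.toLaurent (R := L))).submatrix σ id := rfl
    have hmapC : (Cm.submatrix id σ).map
          (fun p => Polynomial.eval₂ (LaurentPolynomial.C : L →+* LaurentPolynomial L) (T (-1)) p)
        = (Cm.map (phi L)).submatrix id σ := rfl
    rw [hmapU, hmapC]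
    have e1 : (U.map (Polynomial.toLaurent (R := L))).submatrix σ id * A
        = (U.map (Polynomial.toLaurent (R := L)) * A).submatrix σ id := by
      have := Matrix.submatrix_mul_equiv (U.map (Polynomial.toLaurent (R := L))) A
        σ (Equiv.refl (Fin n)) id
      simpa using this
    have e2 : (U.map (Polynomial.toLaurent (R := L)) * A).submatrix σ id
          * (Cm.map (phi L)).submatrix id σ
        = (U.map (Polynomial.toLaurent (R := L)) * A * Cm.map (phi L)).submatrix σ σ := by
      have := Matrix.submatrix_mul_equiv (U.map (Polynomial.toLaurent (R := L)) * A)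
        (Cm.map (phi L)) σ (Equiv.refl (Fin n)) σ
      simpa using this
    rw [e1, e2, main]
    rw [Matrix.submatrix_diagonal _ _ σ.injective]
    rfl
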